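/- There exist absolute constants c₁, c₂ > 0 such that for every integer τ ≥ 1, c₁ · τ^{−1/2} ≤ π/2 − Σ_{k=0}^{τ} c_k ≤ c₂ · τ^{−1/2}. -/

import Mathlib

open Finset Real Filter

/-- Taylor coefficients of `arcsin`: `c_k = (2k)! / (4^k (k!)^2 (2k+1))`. -/
noncomputable def arcsinCoeff (k : ℕ) : ℝ :=
  (Nat.factorial (2 * k) : ℝ) / (4 ^ k * (Nat.factorial k : ℝ) ^ 2 * (2 * k + 1))

noncomputable def AA (k : ℕ) : ℝ :=
  (Nat.factorial (2 * k) : ℝ) / (4 ^ k * (Nat.factorial k : ℝ) ^ 2)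

lemma AA_pos (k : ℕ) : 0 < AA k := by
  unfold AA
  positivity

lemma AA_zero : AA 0 = 1 := by simp [AA]

lemma AA_one : AA 1 = 1 / 2 := by norm_num [AA, Nat.factorial]

lemma AA_succ (k : ℕ) : AA (k + 1) = AA k * (2 * k + 1) / (2 * k + 2) := by
  unfold AA
  have h1 : 2 * (k + 1) = 2 * k + 1 + 1 := by ring
  rw [h1, Nat.factorial_succ, Nat.factorial_succ, Nat.factorial_succ]
  push_cast
  have h2 : (Nat.factorial k : ℝ) ≠ 0 := Nat.cast_ne_zero.2 (Nat.factorial_ne_zero k)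
  have h3 : (0:ℝ) < 2 * k + 2 := by positivity
  field_simp
  ring

lemma AA_sq_le (k : ℕ) : AA k ^ 2 * (2 * k + 1) ≤ 1 := by
  induction k with
  | zero => simp [AA_zero]
  | succ n ih =>
    rw [AA_succ]
    have h3 : (0:ℝ) < 2 * n + 2 := by positivity
    have hA := AA_pos n
    rw [div_pow, div_mul_eq_mul_div, div_le_one (by positivity)]
    push_cast
    nlinarith [sq_nonneg (AA n), sq_nonneg ((n:ℝ))]

lemma AA_sq_ge (k : ℕ) (hk : 1 ≤ k) : 1 ≤ 4 * AA k ^ 2 * k := by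
  induction k with
  | zero => omega
  | succ n ih =>
    rcases Nat.eq_or_lt_of_le hk with h | h
    · have : n = 0 := by omega
      subst this
      norm_num [AA_one]
    · have hn : 1 ≤ n := by omega
      have hih := ih hn
      rw [AA_succ]
      have h3 : (0:ℝ) < 2 * n + 2 := by positivity
      have hA := AA_pos n
      have hn' : (1:ℝ) ≤ n := by exact_mod_cast hn
      rw [div_pow]
      push_cast
      have key : 4 * AA n ^ 2 * ↑n ≤
          4 * ((AA n * (2 * ↑n + 1)) ^ 2 / (2 * ↑n + 2) ^ 2) * (↑n + 1) := by
        rw [mul_div_assoc' 4 _ _, div_mul_eq_mul_div, le_div_iff₀ (by positivity)]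
        nlinarith [sq_nonneg (AA n)]
      linarith

lemma sym_sum (m : ℕ) :
    2 * (∑ i ∈ range (m + 1), (i : ℝ) * (AA i * AA (m - i))) =
      m * ∑ i ∈ range (m + 1), AA i * AA (m - i) := by
  have hrefl : (∑ i ∈ range (m + 1), (i : ℝ) * (AA i * AA (m - i))) =
      ∑ i ∈ range (m + 1), ((m : ℝ) - i) * (AA i * AA (m - i)) := by
    rw [← Finset.sum_range_reflect (fun i => (i : ℝ) * (AA i * AA (m - i))) (m + 1)]
    refine Finset.sum_congr rfl fun j hj => ?_
    have hj' : j ≤ m := Nat.lt_succ_iff.1 (mem_range.1 hj)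
    have h1 : m + 1 - 1 - j = m - j := by omega
    have h2 : m - (m - j) = j := Nat.sub_sub_self hj'
    rw [h1, h2]
    have h3 : ((m - j : ℕ) : ℝ) = (m : ℝ) - j := by
      rw [Nat.cast_sub hj']
    rw [h3]
    ring
  rw [two_mul]
  nth_rewrite 2 [hrefl]
  rw [← Finset.sum_add_distrib, Finset.mul_sum]
  refine Finset.sum_congr rfl fun j hj => ?_
  ring

lemma TT_eq (n : ℕ) : ∑ i ∈ range (n + 1), AA i * AA (n - i) = 1 := by
  induction n with
  | zero => simp [AA_zero]
  | succ n ih =>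
    have key : (∑ i ∈ range (n + 1 + 1), (i : ℝ) * (AA i * AA (n + 1 - i))) =
        ((n : ℝ) + 1) / 2 * ∑ i ∈ range (n + 1), AA i * AA (n - i) := by
      rw [Finset.sum_range_succ' (fun i => (i : ℝ) * (AA i * AA (n + 1 - i))) (n + 1)]
      simp only [Nat.cast_zero, zero_mul, add_zero]
      have step : ∀ i ∈ range (n + 1),
          ((i + 1 : ℕ) : ℝ) * (AA (i + 1) * AA (n + 1 - (i + 1))) =
            ((i : ℝ) + 1 / 2) * (AA i * AA (n - i)) := by
        intro i hi
        have h1 : n + 1 - (i + 1) = n - i := by omega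
        rw [h1, AA_succ]
        push_cast
        field_simp
      rw [Finset.sum_congr rfl step]
      have expand : ∑ i ∈ range (n + 1), ((i : ℝ) + 1 / 2) * (AA i * AA (n - i)) =
          (∑ i ∈ range (n + 1), (i : ℝ) * (AA i * AA (n - i)))
            + 1 / 2 * ∑ i ∈ range (n + 1), AA i * AA (n - i) := by
        rw [Finset.mul_sum, ← Finset.sum_add_distrib]
        exact Finset.sum_congr rfl fun j hj => by ring
      rw [expand]
      have := sym_sum n
      linarith
    have h2 := sym_sum (n + 1)
    rw [key, ih] at h2
    have hn : ((n : ℝ) + 1) ≠ 0 := by positivity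
    push_cast at h2 ⊢
    nlinarith [h2]

noncomputable def PP (n : ℕ) (u : ℝ) : ℝ := ∑ k ∈ range (n + 1), AA k * u ^ k

lemma PP_nonneg (n : ℕ) {u : ℝ} (hu : 0 ≤ u) : 0 ≤ PP n u :=
  Finset.sum_nonneg fun k _ => mul_nonneg (AA_pos k).le (pow_nonneg hu k)

lemma QQ_flip (N : ℕ) (u : ℝ) :
    (∑ m ∈ range N, ∑ k ∈ range (m + 1), (AA k * u ^ k) * (AA (m - k) * u ^ (m - k))) =
      ∑ m ∈ range N, (AA m * u ^ m) * ∑ k ∈ range (N - m), AA k * u ^ k := by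
  rw [Finset.sum_range_diag_flip N (fun a b => (AA a * u ^ a) * (AA b * u ^ b))]
  exact Finset.sum_congr rfl fun m _ => by rw [Finset.mul_sum]

lemma QQ_geom (N : ℕ) (u : ℝ) :
    (∑ m ∈ range N, ∑ k ∈ range (m + 1), (AA k * u ^ k) * (AA (m - k) * u ^ (m - k))) =
      ∑ m ∈ range N, u ^ m := by
  refine Finset.sum_congr rfl fun m _ => ?_
  have : ∀ k ∈ range (m + 1), (AA k * u ^ k) * (AA (m - k) * u ^ (m - k)) =
      (AA k * AA (m - k)) * u ^ m := by
    intro k hk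
    have hk' : k ≤ m := Nat.lt_succ_iff.1 (mem_range.1 hk)
    have : u ^ k * u ^ (m - k) = u ^ m := by
      rw [← pow_add]; congr 1; omega
    calc (AA k * u ^ k) * (AA (m - k) * u ^ (m - k))
        = (AA k * AA (m - k)) * (u ^ k * u ^ (m - k)) := by ring
      _ = (AA k * AA (m - k)) * u ^ m := by rw [this]
  rw [Finset.sum_congr rfl this, ← Finset.sum_mul, TT_eq, one_mul]

lemma PP_sq_le (n : ℕ) {u : ℝ} (hu : 0 ≤ u) (hu1 : u ≤ 1) :
    PP n u ^ 2 * (1 - u) ≤ 1 := by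
  have key : PP n u ^ 2 ≤ ∑ m ∈ range (2 * n + 1), u ^ m := by
    rw [← QQ_geom, QQ_flip]
    have h1 : PP n u ^ 2 = ∑ m ∈ range (n + 1), (AA m * u ^ m) * PP n u := by
      rw [← Finset.sum_mul, pow_two]; rfl
    rw [h1]
    have h2 : ∀ m ∈ range (n + 1), (AA m * u ^ m) * PP n u ≤
        (AA m * u ^ m) * ∑ k ∈ range (2 * n + 1 - m), AA k * u ^ k := by
      intro m hm
      have hm' : m ≤ n := Nat.lt_succ_iff.1 (mem_range.1 hm)
      refine mul_le_mul_of_nonneg_left ?_ (mul_nonneg (AA_pos m).le (pow_nonneg hu m))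
      refine Finset.sum_le_sum_of_subset_of_nonneg ?_ fun k _ _ =>
        mul_nonneg (AA_pos k).le (pow_nonneg hu k)
      exact Finset.range_subset_range.2 (by omega)
    refine le_trans (Finset.sum_le_sum h2) ?_
    refine Finset.sum_le_sum_of_subset_of_nonneg (Finset.range_subset_range.2 (by omega))
      fun m _ _ => mul_nonneg (mul_nonneg (AA_pos m).le (pow_nonneg hu m))
        (Finset.sum_nonneg fun k _ => mul_nonneg (AA_pos k).le (pow_nonneg hu k))
  have hgeom : (∑ m ∈ range (2 * n + 1), u ^ m) * (1 - u) = 1 - u ^ (2 * n + 1) := by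
    have := geom_sum_mul u (2 * n + 1)
    linarith [this]
  have hup : 0 ≤ u ^ (2 * n + 1) := pow_nonneg hu _
  nlinarith [PP_nonneg n hu, Finset.sum_nonneg (fun m (_ : m ∈ range (2*n+1)) => pow_nonneg hu m)]

lemma le_PP_sq (n : ℕ) {u : ℝ} (hu : 0 ≤ u) (hu1 : u ≤ 1) :
    1 - u ^ (n + 1) ≤ PP n u ^ 2 * (1 - u) := by
  have key : (∑ m ∈ range (n + 1), u ^ m) ≤ PP n u ^ 2 := by
    rw [← QQ_geom, QQ_flip]
    have h1 : PP n u ^ 2 = ∑ m ∈ range (n + 1), (AA m * u ^ m) * PP n u := by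
      rw [← Finset.sum_mul, pow_two]; rfl
    rw [h1]
    refine Finset.sum_le_sum fun m hm => ?_
    have hm' : m ≤ n := Nat.lt_succ_iff.1 (mem_range.1 hm)
    refine mul_le_mul_of_nonneg_left ?_ (mul_nonneg (AA_pos m).le (pow_nonneg hu m))
    refine Finset.sum_le_sum_of_subset_of_nonneg ?_ fun k _ _ =>
      mul_nonneg (AA_pos k).le (pow_nonneg hu k)
    exact Finset.range_subset_range.2 (by omega)
  have hgeom : (∑ m ∈ range (n + 1), u ^ m) * (1 - u) = 1 - u ^ (n + 1) := by
    have := geom_sum_mul u (n + 1)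
    linarith [this]
  nlinarith [Finset.sum_nonneg (fun m (_ : m ∈ range (n+1)) => pow_nonneg hu m)]

lemma PP_le_inv_sqrt (n : ℕ) {u : ℝ} (hu : 0 ≤ u) (hu1 : u < 1) :
    PP n u ≤ (Real.sqrt (1 - u))⁻¹ := by
  set s := Real.sqrt (1 - u) with hs
  have hspos : 0 < s := Real.sqrt_pos.2 (by linarith)
  have hssq : s ^ 2 = 1 - u := Real.sq_sqrt (by linarith)
  have h1 : (PP n u * s) ^ 2 ≤ 1 := by
    have := PP_sq_le n hu hu1.le
    nlinarith
  have h2 : PP n u * s ≤ 1 := by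
    nlinarith [mul_nonneg (PP_nonneg n hu) hspos.le]
  calc PP n u = (PP n u * s) * s⁻¹ := by field_simp
    _ ≤ 1 * s⁻¹ := mul_le_mul_of_nonneg_right h2 (inv_nonneg.2 hspos.le)
    _ = s⁻¹ := one_mul _

lemma inv_sqrt_sub_PP_le (n : ℕ) {u : ℝ} (hu : 0 ≤ u) (hu1 : u < 1) :
    (Real.sqrt (1 - u))⁻¹ - PP n u ≤ u ^ (n + 1) * (Real.sqrt (1 - u))⁻¹ := by
  set s := Real.sqrt (1 - u) with hs
  have hspos : 0 < s := Real.sqrt_pos.2 (by linarith)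
  have hssq : s ^ 2 = 1 - u := Real.sq_sqrt (by linarith)
  have h1 : 1 - u ^ (n + 1) ≤ (PP n u * s) ^ 2 := by
    have := le_PP_sq n hu hu1.le
    nlinarith
  have h2 : PP n u * s ≤ 1 := by
    have := PP_sq_le n hu hu1.le
    nlinarith [mul_nonneg (PP_nonneg n hu) hspos.le]
  have h3 : 1 - u ^ (n + 1) ≤ PP n u * s := by
    nlinarith [mul_nonneg (PP_nonneg n hu) hspos.le]
  have h5 : 1 - PP n u * s ≤ u ^ (n + 1) := by nlinarith
  calc s⁻¹ - PP n u = (1 - PP n u * s) * s⁻¹ := by field_simp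
    _ ≤ u ^ (n + 1) * s⁻¹ := mul_le_mul_of_nonneg_right h5 (inv_nonneg.2 hspos.le)

lemma coeff_mul (k : ℕ) : arcsinCoeff k * (2 * k + 1) = AA k := by
  unfold arcsinCoeff AA
  have h : ((2:ℝ) * k + 1) ≠ 0 := by positivity
  field_simp

lemma coeff_nonneg (k : ℕ) : 0 ≤ arcsinCoeff k := by
  unfold arcsinCoeff; positivity

noncomputable def FF (n : ℕ) (x : ℝ) : ℝ :=
  ∑ k ∈ range (n + 1), arcsinCoeff k * x ^ (2 * k + 1)

lemma FF_continuous (n : ℕ) : Continuous (FF n) := by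
  unfold FF
  exact continuous_finset_sum _ fun k _ => (continuous_const.mul (continuous_pow _))

lemma FF_zero (n : ℕ) : FF n 0 = 0 := by
  unfold FF
  simp

lemma FF_hasDerivAt (n : ℕ) (x : ℝ) : HasDerivAt (FF n) (PP n (x ^ 2)) x := by
  have h : ∀ k ∈ range (n + 1), HasDerivAt (fun y => arcsinCoeff k * y ^ (2 * k + 1))
      (AA k * (x ^ 2) ^ k) x := by
    intro k _
    have h1 := (hasDerivAt_pow (2 * k + 1) x).const_mul (arcsinCoeff k)
    have h2 : arcsinCoeff k * (((2 * k + 1 : ℕ) : ℝ) * x ^ (2 * k + 1 - 1)) =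
        AA k * (x ^ 2) ^ k := by
      rw [← pow_mul]
      have : 2 * k + 1 - 1 = 2 * k := rfl
      rw [this]
      push_cast
      rw [← coeff_mul k]
      ring
    rw [h2] at h1
    exact h1
  have := HasDerivAt.fun_sum h
  unfold FF PP
  convert this using 1

lemma arcsin_sub_FF (n : ℕ) {x : ℝ} (hx0 : 0 < x) (hx1 : x < 1) :
    0 ≤ Real.arcsin x - FF n x ∧
      Real.arcsin x - FF n x ≤ x ^ (2 * n + 3) * (Real.sqrt (1 - x ^ 2))⁻¹ := by
  set φ : ℝ → ℝ := fun t => Real.arcsin t - FF n t with hφ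
  set g : ℝ → ℝ := fun t => (Real.sqrt (1 - t ^ 2))⁻¹ - PP n (t ^ 2) with hg
  have hder : ∀ t ∈ Set.Icc (0:ℝ) x, HasDerivAt φ (g t) t := by
    intro t ht
    obtain ⟨ht0, htx⟩ := ht
    have ht1 : t < 1 := lt_of_le_of_lt htx hx1
    have h1 : HasDerivAt Real.arcsin (1 / Real.sqrt (1 - t ^ 2)) t :=
      Real.hasDerivAt_arcsin (by linarith) (by linarith)
    have h2 := (h1.sub (FF_hasDerivAt n t))
    have : 1 / Real.sqrt (1 - t ^ 2) - PP n (t ^ 2) = g t := by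
      rw [hg, one_div]
    rwa [this] at h2
  have hgt : ∀ t ∈ Set.Icc (0:ℝ) x, 0 ≤ g t ∧ g t ≤ x ^ (2 * n + 2) * (Real.sqrt (1 - x ^ 2))⁻¹ := by
    intro t ht
    obtain ⟨ht0, htx⟩ := ht
    have ht1 : t < 1 := lt_of_le_of_lt htx hx1
    have hu0 : (0:ℝ) ≤ t ^ 2 := sq_nonneg t
    have hu1 : t ^ 2 < 1 := by nlinarith
    have hx2 : x ^ 2 < 1 := by nlinarith
    constructor
    · have := PP_le_inv_sqrt n hu0 hu1
      simp only [hg]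
      linarith
    · have h1 := inv_sqrt_sub_PP_le n hu0 hu1
      have h2 : (t ^ 2) ^ (n + 1) ≤ x ^ (2 * n + 2) := by
        rw [← pow_mul]
        have : 2 * (n + 1) = 2 * n + 2 := by ring
        rw [this]
        exact pow_le_pow_left₀ (by positivity) (by nlinarith) _
      have h3 : (Real.sqrt (1 - t ^ 2))⁻¹ ≤ (Real.sqrt (1 - x ^ 2))⁻¹ := by
        apply inv_anti₀
        · exact Real.sqrt_pos.2 (by nlinarith)
        · exact Real.sqrt_le_sqrt (by nlinarith)
      have h4 : (0:ℝ) < (Real.sqrt (1 - t ^ 2))⁻¹ :=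
        inv_pos.2 (Real.sqrt_pos.2 (by nlinarith))
      have h5 : (t ^ 2) ^ (n + 1) * (Real.sqrt (1 - t ^ 2))⁻¹ ≤
          x ^ (2 * n + 2) * (Real.sqrt (1 - x ^ 2))⁻¹ := by
        apply mul_le_mul h2 h3 h4.le (by positivity)
      simp only [hg]
      linarith
  constructor
  · -- monotonicity
    have hmono : MonotoneOn φ (Set.Icc 0 x) := by
      apply monotoneOn_of_deriv_nonneg (convex_Icc 0 x)
      · exact (Real.continuous_arcsin.sub (FF_continuous n)).continuousOn
      · intro t ht
        rw [interior_Icc] at ht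
        exact (hder t ⟨ht.1.le, ht.2.le⟩).differentiableAt.differentiableWithinAt
      · intro t ht
        rw [interior_Icc] at ht
        rw [(hder t ⟨ht.1.le, ht.2.le⟩).deriv]
        exact (hgt t ⟨ht.1.le, ht.2.le⟩).1
    have := hmono (Set.left_mem_Icc.2 hx0.le) (Set.right_mem_Icc.2 hx0.le) hx0.le
    simp only [hφ, FF_zero, Real.arcsin_zero, sub_zero] at this ⊢
    linarith
  · have key := norm_image_sub_le_of_norm_deriv_le_segment'
      (f := φ) (f' := g) (C := x ^ (2 * n + 2) * (Real.sqrt (1 - x ^ 2))⁻¹)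
      (fun t ht => (hder t ht).hasDerivWithinAt)
      (fun t ht => by
        rw [Real.norm_eq_abs, abs_of_nonneg (hgt t (Set.mem_Icc_of_Ico ht)).1]
        exact (hgt t (Set.mem_Icc_of_Ico ht)).2)
      x (Set.right_mem_Icc.2 hx0.le)
    simp only [hφ, FF_zero, Real.arcsin_zero, sub_zero, Real.norm_eq_abs] at key
    have h6 : x ^ (2 * n + 2) * (Real.sqrt (1 - x ^ 2))⁻¹ * (x - 0) =
        x ^ (2 * n + 3) * (Real.sqrt (1 - x ^ 2))⁻¹ := by
      rw [sub_zero]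
      ring
    have key2 : Real.arcsin x - FF n x ≤ x ^ (2 * n + 2) * (Real.sqrt (1 - x ^ 2))⁻¹ * x :=
      le_trans (le_abs_self _) key
    calc Real.arcsin x - FF n x ≤ x ^ (2 * n + 2) * (Real.sqrt (1 - x ^ 2))⁻¹ * x := key2
      _ = x ^ (2 * n + 3) * (Real.sqrt (1 - x ^ 2))⁻¹ := by ring

lemma FF_one (n : ℕ) : FF n 1 = ∑ k ∈ range (n + 1), arcsinCoeff k := by
  unfold FF; simp

lemma S_le_pi_div_two (n : ℕ) : ∑ k ∈ range (n + 1), arcsinCoeff k ≤ π / 2 := by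
  rw [← FF_one]
  have hc : Tendsto (FF n) (nhdsWithin 1 (Set.Iio 1)) (nhds (FF n 1)) :=
    ((FF_continuous n).tendsto 1).mono_left nhdsWithin_le_nhds
  refine le_of_tendsto hc ?_
  filter_upwards [Ioo_mem_nhdsLT (show (0:ℝ) < 1 by norm_num)] with x hx
  have h := (arcsin_sub_FF n hx.1 hx.2).1
  linarith [Real.arcsin_le_pi_div_two x]

lemma sum_range_le (n : ℕ) : ∑ k ∈ range n, arcsinCoeff k ≤ π / 2 := by
  refine le_trans ?_ (S_le_pi_div_two n)
  exact Finset.sum_le_sum_of_subset_of_nonneg (Finset.range_subset_range.2 (by omega))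
    fun k _ _ => coeff_nonneg k

lemma summable_coeff : Summable arcsinCoeff :=
  summable_of_sum_range_le coeff_nonneg sum_range_le

lemma FF_tendsto {x : ℝ} (hx0 : 0 < x) (hx1 : x < 1) :
    Tendsto (fun n => FF n x) atTop (nhds (Real.arcsin x)) := by
  have hK : (0:ℝ) ≤ (Real.sqrt (1 - x ^ 2))⁻¹ := by positivity
  have h1 : Tendsto (fun n : ℕ => x ^ n * (Real.sqrt (1 - x ^ 2))⁻¹) atTop (nhds 0) := by
    have := (tendsto_pow_atTop_nhds_zero_of_lt_one hx0.le hx1).mul_const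
      ((Real.sqrt (1 - x ^ 2))⁻¹)
    simpa using this
  have hsq : Tendsto (fun n : ℕ => Real.arcsin x - FF n x) atTop (nhds 0) := by
    refine tendsto_of_tendsto_of_tendsto_of_le_of_le tendsto_const_nhds h1
      (fun n => (arcsin_sub_FF n hx0 hx1).1) (fun n => ?_)
    refine le_trans (arcsin_sub_FF n hx0 hx1).2 ?_
    exact mul_le_mul_of_nonneg_right (pow_le_pow_of_le_one hx0.le hx1.le (by omega)) hK
  have := tendsto_const_nhds.sub hsq (α := ℕ) (f := fun _ => Real.arcsin x)
  simpa using this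

lemma tsum_coeff : ∑' k, arcsinCoeff k = π / 2 := by
  have le1 : ∑' k, arcsinCoeff k ≤ π / 2 :=
    le_of_tendsto summable_coeff.hasSum.tendsto_sum_nat (Eventually.of_forall sum_range_le)
  have ge1 : π / 2 ≤ ∑' k, arcsinCoeff k := by
    have harc : ∀ x : ℝ, 0 < x → x < 1 → Real.arcsin x ≤ ∑' k, arcsinCoeff k := by
      intro x h0 h1
      refine le_of_tendsto (FF_tendsto h0 h1) (Eventually.of_forall fun n => ?_)
      have hF : FF n x ≤ ∑ k ∈ range (n + 1), arcsinCoeff k := by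
        unfold FF
        refine Finset.sum_le_sum fun k _ => ?_
        have : x ^ (2 * k + 1) ≤ 1 := pow_le_one₀ h0.le h1.le
        nlinarith [coeff_nonneg k]
      exact le_trans hF (Summable.sum_le_tsum _ (fun i _ => coeff_nonneg i) summable_coeff)
    have hc : Tendsto Real.arcsin (nhdsWithin 1 (Set.Iio 1)) (nhds (π / 2)) := by
      have := (Real.continuous_arcsin.tendsto 1).mono_left
        (nhdsWithin_le_nhds (s := Set.Iio (1:ℝ)))
      rwa [Real.arcsin_one] at this
    refine le_of_tendsto hc ?_
    filter_upwards [Ioo_mem_nhdsLT (show (0:ℝ) < 1 by norm_num)] with x hx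
    exact harc x hx.1 hx.2
  linarith

noncomputable def tt (j : ℕ) : ℝ := (Real.sqrt j)⁻¹ - (Real.sqrt (j + 1))⁻¹

lemma tt_nonneg (j : ℕ) (hj : 1 ≤ j) : 0 ≤ tt j := by
  unfold tt
  have h1 : (0:ℝ) < Real.sqrt j := Real.sqrt_pos.2 (by exact_mod_cast Nat.pos_of_ne_zero (by omega))
  have h2 : Real.sqrt j ≤ Real.sqrt (j + 1) := Real.sqrt_le_sqrt (by push_cast; linarith)
  have := inv_anti₀ h1 h2
  linarith

lemma tt_hasSum (m : ℕ) (hm : 1 ≤ m) :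
    HasSum (fun i => tt (m + i)) ((Real.sqrt m)⁻¹) := by
  set f : ℕ → ℝ := fun i => (Real.sqrt ((m : ℝ) + i))⁻¹ with hf
  have hterm : ∀ i, tt (m + i) = f i - f (i + 1) := by
    intro i
    unfold tt
    simp only [hf]
    push_cast
    ring_nf
  have hpart : ∀ N, ∑ i ∈ range N, tt (m + i) = f 0 - f N := by
    intro N
    rw [Finset.sum_congr rfl fun i _ => hterm i]
    exact Finset.sum_range_sub' f N
  have hf0 : f 0 = (Real.sqrt m)⁻¹ := by simp [hf]
  have hup : Tendsto (fun N : ℕ => Real.sqrt ((m:ℝ) + N)) atTop atTop := by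
    rw [tendsto_atTop_atTop]
    intro b
    refine ⟨⌈b^2⌉₊, fun N hN => ?_⟩
    have h2 : (⌈b^2⌉₊ : ℝ) ≤ N := Nat.cast_le.2 hN
    have h1 : (b:ℝ)^2 ≤ (m:ℝ) + N := by
      have := Nat.le_ceil (b^2)
      have h3 : (0:ℝ) ≤ m := Nat.cast_nonneg m
      linarith
    calc b ≤ |b| := le_abs_self b
      _ = Real.sqrt (b^2) := (Real.sqrt_sq_eq_abs b).symm
      _ ≤ Real.sqrt ((m:ℝ) + N) := Real.sqrt_le_sqrt h1
  have hfN : Tendsto f atTop (nhds 0) := hup.inv_tendsto_atTop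
  have hlim : Tendsto (fun N => ∑ i ∈ range N, tt (m + i)) atTop (nhds ((Real.sqrt m)⁻¹)) := by
    have h4 := (tendsto_const_nhds : Tendsto (fun _ : ℕ => f 0) atTop (nhds (f 0))).sub hfN
    rw [sub_zero] at h4
    have h5 : (fun N => ∑ i ∈ range N, tt (m + i)) = fun N => f 0 - f N := funext hpart
    rw [h5, ← hf0]
    exact h4
  have hnn : ∀ i, 0 ≤ tt (m + i) := fun i => tt_nonneg (m + i) (by omega)
  have hbd : ∀ N, ∑ i ∈ range N, tt (m + i) ≤ (Real.sqrt m)⁻¹ := by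
    intro N
    rw [hpart N, hf0]
    have : 0 ≤ f N := by
      simp only [hf]
      positivity
    linarith
  have hsumm : Summable (fun i => tt (m + i)) := summable_of_sum_range_le hnn hbd
  have heq : ∑' i, tt (m + i) = (Real.sqrt m)⁻¹ :=
    tendsto_nhds_unique hsumm.hasSum.tendsto_sum_nat hlim
  exact heq ▸ hsumm.hasSum

lemma coeff_eq (k : ℕ) : arcsinCoeff k = AA k / (2 * k + 1) := by
  have h : ((2:ℝ) * k + 1) ≠ 0 := by positivity
  field_simp
  exact coeff_mul k

lemma AA_ge (j : ℕ) (hj : 1 ≤ j) : (2 * Real.sqrt j)⁻¹ ≤ AA j := by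
  set a := Real.sqrt j with ha
  have hj1 : (1:ℝ) ≤ j := by exact_mod_cast hj
  have hapos : 0 < a := Real.sqrt_pos.2 (by linarith)
  have ha2 : a ^ 2 = j := Real.sq_sqrt (by linarith)
  have hA := AA_pos j
  have hge := AA_sq_ge j hj
  rw [inv_le_iff_one_le_mul₀ (by positivity)]
  have hge' : 1 ≤ (2 * AA j * a) ^ 2 := by nlinarith [hge, ha2]
  nlinarith [hge', mul_pos (mul_pos two_pos hA) hapos]

lemma AA_le (j : ℕ) : AA j ≤ (Real.sqrt (2 * j + 1))⁻¹ := by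
  set w := Real.sqrt (2 * (j:ℝ) + 1) with hw
  have hwpos : 0 < w := Real.sqrt_pos.2 (by positivity)
  have hw2 : w ^ 2 = 2 * j + 1 := Real.sq_sqrt (by positivity)
  have hA := AA_pos j
  have hle := AA_sq_le j
  have key : AA j * w ≤ 1 := by
    have h1 : (AA j * w) ^ 2 ≤ 1 := by nlinarith [hle, hw2]
    nlinarith [h1, mul_pos hA hwpos]
  calc AA j = (AA j * w) * w⁻¹ := by field_simp
    _ ≤ 1 * w⁻¹ := mul_le_mul_of_nonneg_right key (inv_nonneg.2 hwpos.le)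
    _ = w⁻¹ := one_mul _

lemma tt_eq (j : ℕ) (hj : 1 ≤ j) :
    tt j = (Real.sqrt j * Real.sqrt (j + 1) * (Real.sqrt j + Real.sqrt (j + 1)))⁻¹ := by
  set a := Real.sqrt j with ha
  set b := Real.sqrt ((j:ℝ) + 1) with hb
  have hj1 : (1:ℝ) ≤ j := by exact_mod_cast hj
  have hapos : 0 < a := Real.sqrt_pos.2 (by linarith)
  have hbpos : 0 < b := Real.sqrt_pos.2 (by linarith)
  have ha2 : a ^ 2 = j := Real.sq_sqrt (by linarith)
  have hb2 : b ^ 2 = (j:ℝ) + 1 := Real.sq_sqrt (by linarith)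
  have h1 : (a⁻¹ - b⁻¹) * (a * b * (a + b)) = 1 := by
    field_simp
    linear_combination hb2 - ha2
  unfold tt
  rw [← ha, ← hb]
  exact eq_inv_of_mul_eq_one_left h1

lemma coeff_ge_tt (j : ℕ) (hj : 1 ≤ j) : 1 / 3 * tt j ≤ arcsinCoeff j := by
  set a := Real.sqrt j with ha
  set b := Real.sqrt ((j:ℝ) + 1) with hb
  have hj1 : (1:ℝ) ≤ j := by exact_mod_cast hj
  have hapos : 0 < a := Real.sqrt_pos.2 (by linarith)
  have hbpos : 0 < b := Real.sqrt_pos.2 (by linarith)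
  have ha2 : a ^ 2 = j := Real.sq_sqrt (by linarith)
  have hb2 : b ^ 2 = (j:ℝ) + 1 := Real.sq_sqrt (by linarith)
  have hab : a ≤ b := Real.sqrt_le_sqrt (by linarith)
  have ha1 : 1 ≤ a ^ 2 := by rw [ha2]; exact hj1
  have htt : tt j ≤ (2 * a ^ 3)⁻¹ := by
    rw [tt_eq j hj, ← ha, ← hb]
    apply inv_anti₀ (by positivity)
    nlinarith
  have hcoeff : (2 * a * (2 * (j:ℝ) + 1))⁻¹ ≤ arcsinCoeff j := by
    rw [coeff_eq, mul_inv, div_eq_mul_inv]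
    exact mul_le_mul_of_nonneg_right (AA_ge j hj) (by positivity)
  have hmid : (1 / 3) * (2 * a ^ 3)⁻¹ ≤ (2 * a * (2 * (j:ℝ) + 1))⁻¹ := by
    rw [show (1:ℝ)/3 * (2 * a ^ 3)⁻¹ = (3 * (2 * a ^ 3))⁻¹ by
      rw [mul_inv]; ring]
    apply inv_anti₀ (by positivity)
    nlinarith
  have httnn : 0 ≤ tt j := by
    rw [tt_eq j hj, ← ha, ← hb]
    positivity
  calc 1 / 3 * tt j ≤ 1 / 3 * (2 * a ^ 3)⁻¹ := by linarith [htt]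
    _ ≤ (2 * a * (2 * (j:ℝ) + 1))⁻¹ := hmid
    _ ≤ arcsinCoeff j := hcoeff

lemma coeff_le_tt (j : ℕ) (hj : 1 ≤ j) : arcsinCoeff j ≤ 4 * tt j := by
  set a := Real.sqrt j with ha
  set b := Real.sqrt ((j:ℝ) + 1) with hb
  set w := Real.sqrt (2 * (j:ℝ) + 1) with hw
  have hj1 : (1:ℝ) ≤ j := by exact_mod_cast hj
  have hapos : 0 < a := Real.sqrt_pos.2 (by linarith)
  have hbpos : 0 < b := Real.sqrt_pos.2 (by linarith)
  have hwpos : 0 < w := Real.sqrt_pos.2 (by linarith)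
  have ha2 : a ^ 2 = j := Real.sq_sqrt (by linarith)
  have hb2 : b ^ 2 = (j:ℝ) + 1 := Real.sq_sqrt (by linarith)
  have hw2 : w ^ 2 = 2 * (j:ℝ) + 1 := Real.sq_sqrt (by linarith)
  have hab : a ≤ b := Real.sqrt_le_sqrt (by linarith)
  have hbw : b ≤ w := Real.sqrt_le_sqrt (by linarith)
  have hAle : AA j ≤ w⁻¹ := AA_le j
  have h1 : arcsinCoeff j ≤ (w ^ 3)⁻¹ := by
    rw [coeff_eq]
    have step1 : AA j / (2 * (j:ℝ) + 1) ≤ w⁻¹ * (2 * (j:ℝ) + 1)⁻¹ := by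
      rw [div_eq_mul_inv]
      exact mul_le_mul_of_nonneg_right hAle (by positivity)
    have step2 : w⁻¹ * (2 * (j:ℝ) + 1)⁻¹ = (w ^ 3)⁻¹ := by
      rw [← mul_inv, ← hw2]
      congr 1
      ring
    rw [← step2]
    exact step1
  have h2 : (w ^ 3)⁻¹ ≤ 4 * tt j := by
    rw [tt_eq j hj, ← ha, ← hb]
    have s1 : (a * b * (a + b))⁻¹ ≥ (2 * b ^ 3)⁻¹ := by
      apply inv_anti₀ (by positivity)
      nlinarith
    have s2 : (w ^ 3)⁻¹ ≤ (b ^ 3)⁻¹ := by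
      apply inv_anti₀ (by positivity)
      nlinarith
    have s3 : 4 * (2 * b ^ 3)⁻¹ = 2 * (b ^ 3)⁻¹ := by
      rw [mul_inv]
      ring
    nlinarith [inv_pos.2 (show (0:ℝ) < b ^ 3 by positivity)]
  exact le_trans h1 h2

theorem pi_div_two_sub_taylor_partial_sum_bounds :
    ∃ c₁ c₂ : ℝ, c₁ > 0 ∧ c₂ > 0 ∧ ∀ τ : ℕ, 1 ≤ τ →
      c₁ * (Real.sqrt τ)⁻¹ ≤ Real.pi / 2 - ∑ k ∈ Finset.range (τ + 1), arcsinCoeff k ∧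
      Real.pi / 2 - ∑ k ∈ Finset.range (τ + 1), arcsinCoeff k ≤ c₂ * (Real.sqrt τ)⁻¹ := by
  refine ⟨1/6, 4, by norm_num, by norm_num, fun τ hτ => ?_⟩
  set m := τ + 1 with hm
  have hm1 : 1 ≤ m := by omega
  have htail : Real.pi / 2 - ∑ k ∈ Finset.range (τ + 1), arcsinCoeff k
      = ∑' i, arcsinCoeff (i + m) := by
    have := Summable.sum_add_tsum_nat_add (f := arcsinCoeff) m summable_coeff
    rw [← tsum_coeff]
    linarith [this]
  have hsummtail : Summable (fun i => arcsinCoeff (i + m)) :=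
    (summable_nat_add_iff m).2 summable_coeff
  have htt := tt_hasSum m hm1
  have httsummable : Summable (fun i => tt (m + i)) := htt.summable
  -- lower bound
  have hlow : 1/3 * (Real.sqrt m)⁻¹ ≤ ∑' i, arcsinCoeff (i + m) := by
    have h1 : HasSum (fun i => 1/3 * tt (m + i)) (1/3 * (Real.sqrt m)⁻¹) :=
      htt.mul_left (1/3)
    rw [← h1.tsum_eq]
    refine Summable.tsum_le_tsum (fun i => ?_) h1.summable hsummtail
    have h2 := coeff_ge_tt (m + i) (by omega)
    rw [show m + i = i + m from Nat.add_comm m i] at h2 ⊢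
    exact h2
  -- upper bound
  have hup : ∑' i, arcsinCoeff (i + m) ≤ 4 * (Real.sqrt m)⁻¹ := by
    have h1 : HasSum (fun i => 4 * tt (m + i)) (4 * (Real.sqrt m)⁻¹) :=
      htt.mul_left 4
    rw [← h1.tsum_eq]
    refine Summable.tsum_le_tsum (fun i => ?_) hsummtail h1.summable
    have h2 := coeff_le_tt (m + i) (by omega)
    rw [show m + i = i + m from Nat.add_comm m i] at h2 ⊢
    exact h2
  have hτ1 : (1:ℝ) ≤ τ := by exact_mod_cast hτ
  have hsτ : 0 < Real.sqrt τ := Real.sqrt_pos.2 (by linarith)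
  have hsm : 0 < Real.sqrt m := Real.sqrt_pos.2 (by push_cast [hm]; linarith)
  have hmono : Real.sqrt τ ≤ Real.sqrt m := Real.sqrt_le_sqrt (by push_cast [hm]; linarith)
  have hdouble : Real.sqrt m ≤ 2 * Real.sqrt τ := by
    have h4 : (m:ℝ) ≤ 4 * τ := by push_cast [hm]; linarith
    calc Real.sqrt m ≤ Real.sqrt (4 * τ) := Real.sqrt_le_sqrt h4
      _ = 2 * Real.sqrt τ := by
          rw [show (4:ℝ) * τ = 2^2 * τ by norm_num, Real.sqrt_mul (by positivity),
            Real.sqrt_sq (by norm_num)]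
  constructor
  · rw [htail]
    refine le_trans ?_ hlow
    have h5 : (2 * Real.sqrt τ)⁻¹ ≤ (Real.sqrt m)⁻¹ := inv_anti₀ (by positivity) hdouble
    have h6 : (1:ℝ)/6 * (Real.sqrt τ)⁻¹ = 1/3 * (2 * Real.sqrt τ)⁻¹ := by
      rw [mul_inv]; ring
    rw [h6]
    nlinarith [h5]
  · rw [htail]
    refine le_trans hup ?_
    have h5 : (Real.sqrt m)⁻¹ ≤ (Real.sqrt τ)⁻¹ := inv_anti₀ hsτ hmono
    nlinarith [h5]
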